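/- If the step size satisfies 0 < η < 1/(L(1 + 2√p·s)), then for every i ∈ {1, …, p}, the set of cluster points (limits of convergent subsequences) of the global sequence {x(t)} equals the set of cluster points of the local sequence {x^i(t)}. -/

import Mathlib

open Filter Topology

section AuxDescent

variable {E : Type*} [NormedAddCommGroup E] [InnerProductSpace ℝ E] [CompleteSpace E]

lemma descent_lemma (f : E → ℝ) (f' : E → E)
    (hf : ∀ y, HasGradientAt f (f' y) y) (L : ℝ) (hL : 0 ≤ L)
    (hlip : ∀ y z, ‖f' y - f' z‖ ≤ L * ‖y - z‖) (a b : E) :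
    f b ≤ f a + inner (𝕜 := ℝ) (f' a) (b - a) + L / 2 * ‖b - a‖ ^ 2 := by
  set v := b - a with hv
  have hcont : Continuous f' := by
    refine LipschitzWith.continuous (K := L.toNNReal) ?_
    refine LipschitzWith.of_dist_le_mul fun y z => ?_
    rw [dist_eq_norm, dist_eq_norm, Real.coe_toNNReal L hL]
    exact hlip y z
  have hline : ∀ u : ℝ, HasDerivAt (fun u : ℝ => f (a + u • v))
      (inner (𝕜 := ℝ) (f' (a + u • v)) v) u := by
    intro u
    have h1 : HasDerivAt (fun u : ℝ => a + u • v) v u := by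
      simpa using ((hasDerivAt_id u).smul_const v).const_add a
    have h2 := (hf (a + u • v)).hasFDerivAt.comp_hasDerivAt u h1
    simpa [InnerProductSpace.toDual_apply_apply, real_inner_comm, Function.comp_def] using h2
  have hcont2 : Continuous fun u : ℝ => inner (𝕜 := ℝ) (f' (a + u • v)) v :=
    Continuous.inner (hcont.comp (continuous_const.add (continuous_id.smul continuous_const)))
      continuous_const
  have hFTC : f (a + (1:ℝ) • v) - f (a + (0:ℝ) • v)
      = ∫ u in (0:ℝ)..1, inner (𝕜 := ℝ) (f' (a + u • v)) v := by
    rw [intervalIntegral.integral_eq_sub_of_hasDerivAt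
      (fun u _ => hline u) (hcont2.intervalIntegrable 0 1)]
  have hcont3 : Continuous fun u : ℝ => inner (𝕜 := ℝ) (f' a) v + L * u * ‖v‖ ^ 2 := by
    exact continuous_const.add ((continuous_const.mul continuous_id).mul continuous_const)
  have hbound : ∫ u in (0:ℝ)..1, inner (𝕜 := ℝ) (f' (a + u • v)) v
      ≤ ∫ u in (0:ℝ)..1, (inner (𝕜 := ℝ) (f' a) v + L * u * ‖v‖ ^ 2) := by
    apply intervalIntegral.integral_mono_on (by norm_num)
      (hcont2.intervalIntegrable 0 1) (hcont3.intervalIntegrable 0 1)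
    intro u hu
    have h1 : inner (𝕜 := ℝ) (f' (a + u • v) - f' a) v ≤ L * u * ‖v‖ ^ 2 := by
      calc inner (𝕜 := ℝ) (f' (a + u • v) - f' a) v ≤ ‖f' (a + u • v) - f' a‖ * ‖v‖ :=
            real_inner_le_norm _ _
        _ ≤ (L * ‖a + u • v - a‖) * ‖v‖ := by
            gcongr; exact hlip _ _
        _ = L * (|u| * ‖v‖) * ‖v‖ := by
            rw [add_sub_cancel_left, norm_smul]; simp [Real.norm_eq_abs]
        _ = L * u * ‖v‖ ^ 2 := by rw [abs_of_nonneg hu.1]; ring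
    have h2 := inner_sub_left (𝕜 := ℝ) (f' (a + u • v)) (f' a) v
    linarith [h2.le, h2.symm.le]
  have hint : ∫ u in (0:ℝ)..1, (inner (𝕜 := ℝ) (f' a) v + L * u * ‖v‖ ^ 2)
      = inner (𝕜 := ℝ) (f' a) v + L / 2 * ‖v‖ ^ 2 := by
    have he : (fun u : ℝ => L * u * ‖v‖ ^ 2) = fun u : ℝ => u * (L * ‖v‖ ^ 2) := by
      ext u; ring
    rw [intervalIntegral.integral_add (intervalIntegrable_const)
      (((by fun_prop : Continuous fun u : ℝ => L * u * ‖v‖ ^ 2)).intervalIntegrable 0 1),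
      he, intervalIntegral.integral_mul_const, integral_id, intervalIntegral.integral_const]
    simp; ring
  have hone : a + (1:ℝ) • v = b := by simp [hv]
  have h0 : a + (0:ℝ) • v = a := by simp
  rw [hone, h0] at hFTC
  linarith [hFTC, hbound, hint.le, hint.ge]

end AuxDescent

lemma ereal_coe_sum {ι : Type*} (S : Finset ι) (h : ι → ℝ) :
    ((∑ i ∈ S, h i : ℝ) : EReal) = ∑ i ∈ S, ((h i : ℝ) : EReal) := by
  classical
  induction S using Finset.induction_on with
  | empty => simp
  | @insert a S' hni ih =>
      rw [Finset.sum_insert hni, Finset.sum_insert hni, EReal.coe_add, ih]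

lemma ereal_sum_ne_bot {ι : Type*} (S : Finset ι) (h : ι → EReal)
    (hb : ∀ i ∈ S, h i ≠ ⊥) : ∑ i ∈ S, h i ≠ ⊥ := by
  classical
  induction S using Finset.induction_on with
  | empty => simp
  | @insert a S' hni ih =>
      rw [Finset.sum_insert hni]
      intro hbot
      rcases EReal.add_eq_bot_iff.mp hbot with h | h
      · exact hb a (Finset.mem_insert_self a S') h
      · exact ih (fun i hi => hb i (Finset.mem_insert_of_mem hi)) h

set_option maxHeartbeats 4000000

noncomputable abbrev EE (p : ℕ) (d : Fin p → ℕ) : Type :=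
  PiLp 2 (fun i : Fin p => EuclideanSpace ℝ (Fin (d i)))
theorem stmt_6
    (p s : ℕ) (hp : 1 ≤ p) (d : Fin p → ℕ) (hd : ∀ i, 1 ≤ d i)
    (τ : Fin p → Fin p → ℕ → ℕ)
    (hτ_le : ∀ i j t, τ i j t ≤ t)
    (hτ_ge : ∀ i j t, t ≤ τ i j t + s)
    (hτ_self : ∀ i t, τ i i t = t)
    (x : (i : Fin p) → ℕ → EuclideanSpace ℝ (Fin (d i)))
    (X : ℕ → EE p d) (hX : ∀ t i, X t i = x i t)
    (Xl : Fin p → ℕ → EE p d) (hXl : ∀ i t j, Xl i t j = x j (τ i j t))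
    (T : Fin p → Set ℕ)
    (hT : ∀ i t, ∃ k ∈ T i, t ≤ k ∧ k ≤ t + s)
    (η L : ℝ) (hη : 0 < η) (hL : 0 < L)
    (f : EE p d → ℝ) (f' : EE p d → EE p d)
    (hf : ∀ y, HasGradientAt f (f' y) y)
    (hlip : ∀ y z, ‖f' y - f' z‖ ≤ L * ‖y - z‖)
    (g : (i : Fin p) → EuclideanSpace ℝ (Fin (d i)) → EReal)
    (hg_nebot : ∀ i z, g i z ≠ ⊥)
    (hg_proper : ∀ i, ∃ z, g i z ≠ ⊤)
    (hg_lsc : ∀ i, LowerSemicontinuous (g i))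
    (F : EE p d → EReal)
    (hF : ∀ y, F y = (f y : EReal) + ∑ i, g i (y i))
    (hF_bdd : ∃ m : ℝ, ∀ y, (m : EReal) ≤ F y)
    (hF0 : F (X 0) < ⊤)
    (hskip : ∀ i t, t ∉ T i → x i (t + 1) = x i t)
    (hupd : ∀ i t, t ∈ T i → ∀ z : EuclideanSpace ℝ (Fin (d i)),
      g i (x i (t + 1)) +
        ((1 / (2 * η) * ‖x i (t + 1) - (x i t - η • f' (Xl i t) i)‖ ^ 2 : ℝ) : EReal)
      ≤ g i z + ((1 / (2 * η) * ‖z - (x i t - η • f' (Xl i t) i)‖ ^ 2 : ℝ) : EReal))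
    (hstep : η < 1 / (L * (1 + 2 * Real.sqrt p * s))) :
    ∀ i : Fin p,
      {xstar : EE p d | ∃ φ : ℕ → ℕ, StrictMono φ ∧
          Tendsto (fun m => X (φ m)) atTop (𝓝 xstar)} =
      {xstar : EE p d | ∃ φ : ℕ → ℕ, StrictMono φ ∧
          Tendsto (fun m => Xl i (φ m)) atTop (𝓝 xstar)} := by
  classical
  intro i
  -- increments
  set a : ℕ → ℝ := fun t => ‖X (t + 1) - X t‖ with ha_def
  have hat : ∀ t, a t = ‖X (t + 1) - X t‖ := fun _ => rfl
  have hanonneg : ∀ t, 0 ≤ a t := fun t => norm_nonneg _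
  set b : ℕ → ℝ := fun t => ∑ r ∈ Finset.Ico (t - s) t, a r with hb_def
  have hbt : ∀ t, b t = ∑ r ∈ Finset.Ico (t - s) t, a r := fun _ => rfl
  have hbnonneg : ∀ t, 0 ≤ b t := fun t => Finset.sum_nonneg fun r _ => hanonneg r
  have hasq : ∀ t, a t ^ 2 = ∑ j, ‖x j (t + 1) - x j t‖ ^ 2 := by
    intro t
    rw [hat, PiLp.norm_sq_eq_of_L2]
    exact Finset.sum_congr rfl fun j _ => by
      rw [show (X (t + 1) - X t) j = X (t + 1) j - X t j from rfl, hX, hX]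
  -- finiteness of g along the trajectory
  have hF0' : (f (X 0) : EReal) + ∑ j, g j (x j 0) < ⊤ := by
    rw [hF] at hF0; simpa only [hX] using hF0
  have hsum0 : ∑ j, g j (x j 0) ≠ ⊤ := by
    intro h
    rw [h, EReal.add_top_of_ne_bot (EReal.coe_ne_bot _)] at hF0'
    exact (lt_irrefl _ hF0')
  have h0 : ∀ j, g j (x j 0) ≠ ⊤ := by
    intro j hj
    apply hsum0
    rw [← Finset.add_sum_erase _ _ (Finset.mem_univ j), hj,
      EReal.top_add_of_ne_bot (ereal_sum_ne_bot _ _ fun j' _ => hg_nebot j' _)]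
  have hgfin : ∀ t j, g j (x j t) ≠ ⊤ := by
    intro t
    induction t with
    | zero => exact h0
    | succ t ih =>
        intro j
        by_cases hmem : t ∈ T j
        · have h := hupd j t hmem (x j t)
          obtain ⟨r, hr⟩ : ∃ r : ℝ, g j (x j t) = (r : EReal) :=
            ⟨_, (EReal.coe_toReal (ih j) (hg_nebot j _)).symm⟩
          intro htop
          rw [htop, EReal.top_add_coe, hr, ← EReal.coe_add] at h
          exact EReal.coe_ne_top _ (top_le_iff.1 h)
        · rw [hskip j t hmem]; exact ih j
  set G : Fin p → ℕ → ℝ := fun j t => (g j (x j t)).toReal with hG_def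
  have hG : ∀ j t, g j (x j t) = ((G j t : ℝ) : EReal) :=
    fun j t => (EReal.coe_toReal (hgfin t j) (hg_nebot j _)).symm
  -- per-block sufficient decrease
  have hdec : ∀ j t, G j (t + 1) + 1 / (2 * η) * ‖x j (t + 1) - x j t‖ ^ 2
      + inner (𝕜 := ℝ) (x j (t + 1) - x j t) (f' (Xl j t) j) ≤ G j t := by
    intro j t
    by_cases hmem : t ∈ T j
    · have h := hupd j t hmem (x j t)
      rw [hG j (t + 1), hG j t, ← EReal.coe_add, ← EReal.coe_add, EReal.coe_le_coe_iff] at h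
      set u := x j (t + 1) - x j t with hu
      set w := f' (Xl j t) j with hw
      have e1 : x j (t + 1) - (x j t - η • w) = u + η • w := by rw [hu]; abel
      have e2 : x j t - (x j t - η • w) = η • w := by abel
      rw [e1, e2] at h
      have e3 : ‖u + η • w‖ ^ 2 = ‖u‖ ^ 2 + 2 * (η * inner (𝕜 := ℝ) u w) + η ^ 2 * ‖w‖ ^ 2 := by
        rw [norm_add_sq_real, real_inner_smul_right, norm_smul, Real.norm_eq_abs,
          abs_of_pos hη, mul_pow]
      have e4 : ‖η • w‖ ^ 2 = η ^ 2 * ‖w‖ ^ 2 := by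
        rw [norm_smul, Real.norm_eq_abs, abs_of_pos hη, mul_pow]
      rw [e3, e4] at h
      have hη' : (η : ℝ) ≠ 0 := ne_of_gt hη
      have expand : 1 / (2 * η) * (‖u‖ ^ 2 + 2 * (η * inner (𝕜 := ℝ) u w) + η ^ 2 * ‖w‖ ^ 2)
          = 1 / (2 * η) * ‖u‖ ^ 2 + inner (𝕜 := ℝ) u w + 1 / (2 * η) * (η ^ 2 * ‖w‖ ^ 2) := by
        field_simp
      linarith [h, expand.le, expand.ge]
    · have hx1 : x j (t + 1) = x j t := hskip j t hmem
      have hGe : G j (t + 1) = G j t := by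
        show (g j (x j (t + 1))).toReal = (g j (x j t)).toReal
        rw [hx1]
      rw [hGe, hx1]
      simp
  -- aggregated decrease
  set W : ℕ → EE p d := fun t => WithLp.toLp 2 (fun j => f' (Xl j t) j : (j : Fin p) → EuclideanSpace ℝ (Fin (d j))) with hW_def
  have hsumdec : ∀ t, (∑ j, G j (t + 1)) + 1 / (2 * η) * a t ^ 2
      + inner (𝕜 := ℝ) (X (t + 1) - X t) (W t) ≤ ∑ j, G j t := by
    intro t
    have h2 : inner (𝕜 := ℝ) (X (t + 1) - X t) (W t)
        = ∑ j, inner (𝕜 := ℝ) (x j (t + 1) - x j t) (f' (Xl j t) j) := by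
      rw [PiLp.inner_apply]
      exact Finset.sum_congr rfl fun j _ => by
        rw [show (X (t + 1) - X t) j = X (t + 1) j - X t j from rfl, hX, hX]
    rw [hasq, h2, Finset.mul_sum, ← Finset.sum_add_distrib, ← Finset.sum_add_distrib]
    exact Finset.sum_le_sum fun j _ => hdec j t
  -- descent lemma
  have hdesc : ∀ t, f (X (t + 1)) ≤ f (X t)
      + inner (𝕜 := ℝ) (f' (X t)) (X (t + 1) - X t) + L / 2 * a t ^ 2 :=
    fun t => descent_lemma f f' hf L hL.le hlip (X t) (X (t + 1))
  -- distance from global to local models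
  have hXl_close : ∀ (i' : Fin p) (t : ℕ), ‖X t - Xl i' t‖ ≤ b t := by
    intro i' t
    set D : ℕ → EE p d := fun r =>
      WithLp.toLp 2 (fun j => if τ i' j t ≤ r then x j (r + 1) - x j r else 0 :
        (j : Fin p) → EuclideanSpace ℝ (Fin (d j))) with hD_def
    have hDapp : ∀ r j, D r j = if τ i' j t ≤ r then x j (r + 1) - x j r else 0 :=
      fun _ _ => rfl
    have hsplit : X t - Xl i' t = ∑ r ∈ Finset.Ico (t - s) t, D r := by
      refine PiLp.ext fun j => ?_
      rw [WithLp.ofLp_sum, Finset.sum_apply j _ (fun r => (D r).ofLp)]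
      show X t j - Xl i' t j = _
      rw [hX, hXl]
      have hτ1 : t - s ≤ τ i' j t := Nat.sub_le_iff_le_add.2 (hτ_ge i' j t)
      have hτ2 : τ i' j t ≤ t := hτ_le i' j t
      have hsub : Finset.Ico (τ i' j t) t ⊆ Finset.Ico (t - s) t :=
        Finset.Ico_subset_Ico hτ1 le_rfl
      rw [show (∑ r ∈ Finset.Ico (t - s) t, D r j)
          = ∑ r ∈ Finset.Ico (τ i' j t) t, D r j from
        (Finset.sum_subset hsub fun r hr hnr => by
          rw [hDapp, if_neg]
          intro hle
          exact hnr (Finset.mem_Ico.2 ⟨hle, (Finset.mem_Ico.1 hr).2⟩)).symm]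
      rw [Finset.sum_congr rfl fun r hr => by
        rw [hDapp, if_pos (Finset.mem_Ico.1 hr).1]]
      rw [Finset.sum_Ico_eq_sub _ hτ2, Finset.sum_range_sub (fun r => x j r),
        Finset.sum_range_sub (fun r => x j r)]
      abel
    have hDnorm : ∀ r, ‖D r‖ ≤ a r := by
      intro r
      have h1 : ‖D r‖ ^ 2 ≤ a r ^ 2 := by
        rw [PiLp.norm_sq_eq_of_L2, hasq r]
        apply Finset.sum_le_sum
        intro j _
        rw [hDapp]
        split
        · exact le_rfl
        · calc ‖(0 : EuclideanSpace ℝ (Fin (d j)))‖ ^ 2 = 0 := by simp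
            _ ≤ _ := sq_nonneg _
      calc ‖D r‖ = Real.sqrt (‖D r‖ ^ 2) := (Real.sqrt_sq (norm_nonneg _)).symm
        _ ≤ Real.sqrt (a r ^ 2) := Real.sqrt_le_sqrt h1
        _ = a r := Real.sqrt_sq (hanonneg r)
    calc ‖X t - Xl i' t‖ = ‖∑ r ∈ Finset.Ico (t - s) t, D r‖ := by rw [hsplit]
      _ ≤ ∑ r ∈ Finset.Ico (t - s) t, ‖D r‖ := norm_sum_le _ _
      _ ≤ ∑ r ∈ Finset.Ico (t - s) t, a r := Finset.sum_le_sum fun r _ => hDnorm r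
  -- gradient-error bound
  have hY : ∀ t, ‖f' (X t) - W t‖ ≤ Real.sqrt p * (L * b t) := by
    intro t
    have h1 : ‖f' (X t) - W t‖ ^ 2 ≤ p * (L * b t) ^ 2 := by
      rw [PiLp.norm_sq_eq_of_L2]
      calc ∑ j, ‖(f' (X t) - W t) j‖ ^ 2 ≤ ∑ _j : Fin p, (L * b t) ^ 2 := by
            apply Finset.sum_le_sum
            intro j _
            have hblock : ‖(f' (X t) - W t) j‖ ≤ ‖f' (X t) - f' (Xl j t)‖ := by
              have e : (f' (X t) - W t) j = (f' (X t) - f' (Xl j t)) j := rfl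
              rw [e]
              have h2 : ‖(f' (X t) - f' (Xl j t)) j‖ ^ 2 ≤ ‖f' (X t) - f' (Xl j t)‖ ^ 2 := by
                conv_rhs => rw [PiLp.norm_sq_eq_of_L2 _ (f' (X t) - f' (Xl j t))]
                exact Finset.single_le_sum (f := fun j' => ‖(f' (X t) - f' (Xl j t)) j'‖ ^ 2)
                  (fun _ _ => by positivity) (Finset.mem_univ j)
              calc ‖(f' (X t) - f' (Xl j t)) j‖
                  = Real.sqrt (‖(f' (X t) - f' (Xl j t)) j‖ ^ 2) :=
                    (Real.sqrt_sq (norm_nonneg _)).symm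
                _ ≤ Real.sqrt (‖f' (X t) - f' (Xl j t)‖ ^ 2) := Real.sqrt_le_sqrt h2
                _ = ‖f' (X t) - f' (Xl j t)‖ := Real.sqrt_sq (norm_nonneg _)
            have h3 : ‖f' (X t) - f' (Xl j t)‖ ≤ L * ‖X t - Xl j t‖ := hlip _ _
            have h4 : ‖X t - Xl j t‖ ≤ b t := hXl_close j t
            have h5 : ‖(f' (X t) - W t) j‖ ≤ L * b t := by
              calc ‖(f' (X t) - W t) j‖ ≤ L * ‖X t - Xl j t‖ := hblock.trans h3
                _ ≤ L * b t := by
                    exact mul_le_mul_of_nonneg_left h4 hL.le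
            exact pow_le_pow_left₀ (norm_nonneg _) h5 2
        _ = p * (L * b t) ^ 2 := by
            rw [Finset.sum_const, Finset.card_univ, Fintype.card_fin, nsmul_eq_mul]
    have hsq : Real.sqrt (p * (L * b t) ^ 2) = Real.sqrt p * (L * b t) := by
      rw [Real.sqrt_mul (by positivity), Real.sqrt_sq (by positivity)]
    calc ‖f' (X t) - W t‖ = Real.sqrt (‖f' (X t) - W t‖ ^ 2) :=
          (Real.sqrt_sq (norm_nonneg _)).symm
      _ ≤ Real.sqrt (p * (L * b t) ^ 2) := Real.sqrt_le_sqrt h1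
      _ = Real.sqrt p * (L * b t) := hsq
  -- Lyapunov function
  set Fr : ℕ → ℝ := fun t => f (X t) + ∑ j, G j t with hFr_def
  have hstep1 : ∀ t, Fr (t + 1) + (1 / (2 * η) - L / 2 - L * Real.sqrt p * s / 2) * a t ^ 2
      ≤ Fr t + (L * Real.sqrt p / 2) * ∑ r ∈ Finset.Ico (t - s) t, a r ^ 2 := by
    intro t
    have h5 := hsumdec t
    have h6 := hdesc t
    have hcross : inner (𝕜 := ℝ) (f' (X t)) (X (t + 1) - X t)
        - inner (𝕜 := ℝ) (X (t + 1) - X t) (W t) ≤ a t * (Real.sqrt p * (L * b t)) := by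
      have e : inner (𝕜 := ℝ) (f' (X t)) (X (t + 1) - X t)
          - inner (𝕜 := ℝ) (X (t + 1) - X t) (W t)
          = inner (𝕜 := ℝ) (X (t + 1) - X t) (f' (X t) - W t) := by
        rw [inner_sub_right (𝕜 := ℝ) (X (t + 1) - X t) (f' (X t)) (W t),
          real_inner_comm (X (t + 1) - X t) (f' (X t))]
      rw [e]
      calc inner (𝕜 := ℝ) (X (t + 1) - X t) (f' (X t) - W t)
          ≤ ‖X (t + 1) - X t‖ * ‖f' (X t) - W t‖ := real_inner_le_norm _ _
        _ ≤ a t * (Real.sqrt p * (L * b t)) :=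
            mul_le_mul_of_nonneg_left (hY t) (hanonneg t)
    have h7 : a t * b t ≤ (s * a t ^ 2 + ∑ r ∈ Finset.Ico (t - s) t, a r ^ 2) / 2 := by
      rw [hbt, Finset.mul_sum]
      have hcard : (((Finset.Ico (t - s) t).card : ℕ) : ℝ) ≤ (s : ℝ) := by
        rw [Nat.card_Ico]
        exact_mod_cast (by omega : t - (t - s) ≤ s)
      have e1 : ∑ r ∈ Finset.Ico (t - s) t, (a t * a r)
          ≤ ∑ r ∈ Finset.Ico (t - s) t, (a t ^ 2 / 2 + a r ^ 2 / 2) :=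
        Finset.sum_le_sum fun r _ => by nlinarith [sq_nonneg (a t - a r)]
      rw [Finset.sum_add_distrib, Finset.sum_const, nsmul_eq_mul, ← Finset.sum_div] at e1
      nlinarith [e1, hcard, sq_nonneg (a t)]
    have hbb : a t * (Real.sqrt p * (L * b t))
        ≤ L * Real.sqrt p / 2 * (s * a t ^ 2 + ∑ r ∈ Finset.Ico (t - s) t, a r ^ 2) := by
      have hnn : (0 : ℝ) ≤ L * Real.sqrt p := by positivity
      nlinarith [mul_le_mul_of_nonneg_left h7 hnn]
    have hFrt : ∀ u, Fr u = f (X u) + ∑ j, G j u := fun _ => rfl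
    rw [hFrt, hFrt]
    linarith [h5, h6, hcross, hbb]
  -- lower bound on Fr
  obtain ⟨m0, hm0⟩ := hF_bdd
  have hFrlow : ∀ t, m0 ≤ Fr t := by
    intro t
    have h := hm0 (X t)
    rw [hF] at h
    have e : (f (X t) : EReal) + ∑ j, g j (X t j) = ((Fr t : ℝ) : EReal) := by
      show _ = ((f (X t) + ∑ j, G j t : ℝ) : EReal)
      simp only [hX]
      rw [show (∑ j, g j (x j t)) = ∑ j, ((G j t : ℝ) : EReal) from
        Finset.sum_congr rfl fun j _ => hG j t, ← ereal_coe_sum, ← EReal.coe_add]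
    rw [e] at h
    exact_mod_cast h
  -- positivity of the decrease constant
  set c : ℝ := 1 / (2 * η) - L / 2 - L * Real.sqrt p * s with hc_def
  have hcpos : 0 < c := by
    have hD : 0 < L * (1 + 2 * Real.sqrt p * s) := by positivity
    have h8 : L * (1 + 2 * Real.sqrt p * s) < 1 / η := by
      have h9 : η * (L * (1 + 2 * Real.sqrt p * s)) < 1 := (lt_div_iff₀ hD).1 hstep
      rw [lt_div_iff₀ hη]
      nlinarith
    have e : 1 / (2 * η) = (1 / η) / 2 := by
      rw [div_div, mul_comm]
    rw [hc_def, e]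
    nlinarith
  -- bounded partial sums
  have hsumbound : ∀ N, c * ∑ t ∈ Finset.range N, a t ^ 2 ≤ Fr 0 - m0 := by
    intro N
    have htel : ∑ t ∈ Finset.range N, (Fr t - Fr (t + 1)) = Fr 0 - Fr N := by
      have := Finset.sum_range_sub Fr N
      have e : ∑ t ∈ Finset.range N, (Fr t - Fr (t + 1))
          = -∑ t ∈ Finset.range N, (Fr (t + 1) - Fr t) := by
        rw [← Finset.sum_neg_distrib]
        exact Finset.sum_congr rfl fun t _ => by ring
      rw [e, this]; ring
    have hdouble : ∑ t ∈ Finset.range N, ∑ r ∈ Finset.Ico (t - s) t, a r ^ 2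
        ≤ s * ∑ r ∈ Finset.range N, a r ^ 2 := by
      have h9 : ∀ t ∈ Finset.range N, ∑ r ∈ Finset.Ico (t - s) t, a r ^ 2
          = ∑ r ∈ Finset.range N, (if r ∈ Finset.Ico (t - s) t then a r ^ 2 else 0) := by
        intro t ht
        have hsub2 : Finset.Ico (t - s) t ⊆ Finset.range N := by
          intro r hr
          rw [Finset.mem_range]
          have h1 := (Finset.mem_Ico.1 hr).2
          have h2 := Finset.mem_range.1 ht
          omega
        rw [Finset.sum_ite_mem, Finset.inter_eq_right.mpr hsub2]
      rw [Finset.sum_congr rfl h9, Finset.sum_comm]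
      have h10 : ∀ r ∈ Finset.range N,
          ∑ t ∈ Finset.range N, (if r ∈ Finset.Ico (t - s) t then a r ^ 2 else 0)
          ≤ s * a r ^ 2 := by
        intro r _
        rw [← Finset.sum_filter]
        have hsub : (Finset.range N).filter (fun t => r ∈ Finset.Ico (t - s) t)
            ⊆ Finset.Ioc r (r + s) := by
          intro t ht
          have h11 := (Finset.mem_filter.1 ht).2
          rw [Finset.mem_Ico] at h11
          rw [Finset.mem_Ioc]
          omega
        calc ∑ _t ∈ (Finset.range N).filter (fun t => r ∈ Finset.Ico (t - s) t), a r ^ 2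
            = ((Finset.range N).filter (fun t => r ∈ Finset.Ico (t - s) t)).card * a r ^ 2 := by
              rw [Finset.sum_const, nsmul_eq_mul]
          _ ≤ s * a r ^ 2 := by
              have hcard := Finset.card_le_card hsub
              rw [Nat.card_Ioc] at hcard
              have : (((Finset.range N).filter
                  (fun t => r ∈ Finset.Ico (t - s) t)).card : ℝ) ≤ s := by
                exact_mod_cast (by omega : ((Finset.range N).filter
                  (fun t => r ∈ Finset.Ico (t - s) t)).card ≤ s)
              nlinarith [sq_nonneg (a r)]
      calc ∑ r ∈ Finset.range N, ∑ t ∈ Finset.range N,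
            (if r ∈ Finset.Ico (t - s) t then a r ^ 2 else 0)
          ≤ ∑ r ∈ Finset.range N, s * a r ^ 2 := Finset.sum_le_sum h10
        _ = s * ∑ r ∈ Finset.range N, a r ^ 2 := by rw [Finset.mul_sum]
    have hsum1 : ∑ t ∈ Finset.range N,
        ((1 / (2 * η) - L / 2 - L * Real.sqrt p * s / 2) * a t ^ 2)
        ≤ ∑ t ∈ Finset.range N, ((Fr t - Fr (t + 1))
          + (L * Real.sqrt p / 2) * ∑ r ∈ Finset.Ico (t - s) t, a r ^ 2) :=
      Finset.sum_le_sum fun t _ => by linarith [hstep1 t]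
    rw [← Finset.mul_sum] at hsum1
    rw [Finset.sum_add_distrib, htel, ← Finset.mul_sum] at hsum1
    have hFrN := hFrlow N
    have hcsplit : c * ∑ t ∈ Finset.range N, a t ^ 2
        = (1 / (2 * η) - L / 2 - L * Real.sqrt p * s / 2) * ∑ t ∈ Finset.range N, a t ^ 2
          - (L * Real.sqrt p * s / 2) * ∑ t ∈ Finset.range N, a t ^ 2 := by
      rw [hc_def]; ring
    have hlast : (L * Real.sqrt p / 2) * ∑ t ∈ Finset.range N,
        ∑ r ∈ Finset.Ico (t - s) t, a r ^ 2
        ≤ (L * Real.sqrt p / 2) * (s * ∑ r ∈ Finset.range N, a r ^ 2) :=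
      mul_le_mul_of_nonneg_left hdouble (by positivity)
    rw [hcsplit]
    have he : (L * Real.sqrt p * s / 2) * ∑ t ∈ Finset.range N, a t ^ 2
        = (L * Real.sqrt p / 2) * (s * ∑ t ∈ Finset.range N, a t ^ 2) := by ring
    have h2 : (1 / (2 * η) - L / 2 - L * Real.sqrt p * s / 2) * ∑ t ∈ Finset.range N, a t ^ 2
        - (L * Real.sqrt p * s / 2) * ∑ t ∈ Finset.range N, a t ^ 2 ≤ Fr 0 - Fr N := by
      linarith [hsum1, hlast, he.le, he.ge]
    exact h2.trans (by linarith [hFrN])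
  -- summability and limits
  have hS : Summable (fun t => a t ^ 2) :=
    summable_of_sum_range_le (c := (Fr 0 - m0) / c) (fun t => sq_nonneg _)
      (fun N => (le_div_iff₀' hcpos).mpr (hsumbound N))
  have ha2 : Tendsto (fun t => a t ^ 2) atTop (𝓝 0) := hS.tendsto_atTop_zero
  have ha0 : Tendsto a atTop (𝓝 0) := by
    have h := (Real.continuous_sqrt.tendsto 0).comp ha2
    rw [Real.sqrt_zero] at h
    exact h.congr fun t => Real.sqrt_sq (hanonneg t)
  have hb0 : Tendsto b atTop (𝓝 0) := by
    have hsum : Tendsto (fun t => ∑ k ∈ Finset.range s, a (t - s + k)) atTop (𝓝 0) := by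
      have h := tendsto_finset_sum (Finset.range s)
        (fun k _ => ha0.comp ((tendsto_add_atTop_nat k).comp (tendsto_sub_atTop_nat s)))
      simpa using h
    refine Tendsto.congr' ?_ hsum
    filter_upwards [eventually_ge_atTop s] with t ht
    rw [hbt, Finset.sum_Ico_eq_sum_range, show t - (t - s) = s from by omega]
  have hdiff : ∀ i' : Fin p, Tendsto (fun t => X t - Xl i' t) atTop (𝓝 0) := by
    intro i'
    rw [tendsto_zero_iff_norm_tendsto_zero]
    exact squeeze_zero (fun t => norm_nonneg _) (fun t => hXl_close i' t) hb0
  -- conclusion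
  ext xstar
  simp only [Set.mem_setOf_eq]
  constructor
  · rintro ⟨φ, hφ, hconv⟩
    refine ⟨φ, hφ, ?_⟩
    have h := hconv.sub ((hdiff i).comp hφ.tendsto_atTop)
    rw [sub_zero] at h
    refine h.congr fun m => ?_
    show X (φ m) - (X (φ m) - Xl i (φ m)) = Xl i (φ m)
    abel
  · rintro ⟨φ, hφ, hconv⟩
    refine ⟨φ, hφ, ?_⟩
    have h := hconv.add ((hdiff i).comp hφ.tendsto_atTop)
    rw [add_zero] at h
    refine h.congr fun m => ?_
    show Xl i (φ m) + (X (φ m) - Xl i (φ m)) = X (φ m)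
    abel
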